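/- Let ν > 0 and d ≥ 1 an integer. For every ε > 0 there exists Γ_0 ≥ (d+1)/ν such that for all Γ ≥ Γ_0 and all real p ∈ [1, ∞): max( Γ^{dp} exp(−νpΓ), (2/Γ^p) ∫_Γ^∞ exp(−νpr) r^{(d+1)p−1} dr ) ≤ ε^p. -/

import Mathlib

open Real MeasureTheory Set Filter

lemma exp_neg_mul_integral_Ioi (a : ℝ) {c : ℝ} (hc : 0 < c) :
    ∫ x in Set.Ioi a, Real.exp (-c * x) = Real.exp (-c * a) / c := by
  have h := MeasureTheory.integral_Ioi_of_hasDerivAt_of_tendsto'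
    (f := fun x => -Real.exp (-c * x) / c) (f' := fun x => Real.exp (-c * x))
    (a := a) (m := 0) ?_ (exp_neg_integrableOn_Ioi a hc) ?_
  · rw [h]; ring
  · intro x _
    have h : HasDerivAt (fun x : ℝ => Real.exp (-c * x)) (Real.exp (-c * x) * (-c)) x := by
      simpa using ((hasDerivAt_id x).const_mul (-c)).exp
    have h2 := (h.neg).div_const c
    convert h2 using 1
    all_goals try rfl
    field_simp
  · have : Tendsto (fun x : ℝ => Real.exp (-c * x)) atTop (nhds 0) := by
      simpa using Real.tendsto_exp_comp_nhds_zero.2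
        (tendsto_id.const_mul_atTop_of_neg (neg_lt_zero.2 hc))
    simpa using (this.neg).div_const c

theorem stmt3 (ν : ℝ) (hν : 0 < ν) (d : ℕ) (hd : 1 ≤ d) :
    ∀ ε > (0 : ℝ), ∃ Γ₀ : ℝ, ((d : ℝ) + 1) / ν ≤ Γ₀ ∧
      ∀ Γ ≥ Γ₀, ∀ p : ℝ, 1 ≤ p →
        max (Γ ^ ((d : ℝ) * p) * Real.exp (-ν * p * Γ))
          (2 / Γ ^ p *
            ∫ r in Set.Ioi Γ, Real.exp (-ν * p * r) * r ^ (((d : ℝ) + 1) * p - 1))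
        ≤ ε ^ p := by
  intro ε hε
  set M : ℝ := max 1 (4 / ν) with hM
  have hM1 : 1 ≤ M := le_max_left _ _
  have hMν : 4 / ν ≤ M := le_max_right _ _
  -- three eventually statements
  have h1 : ∀ᶠ Γ in atTop, Γ ^ (d : ℝ) * Real.exp (-ν * Γ) ≤ ε :=
    (tendsto_rpow_mul_exp_neg_mul_atTop_nhds_zero (d : ℝ) ν hν).eventually_le_const hε
  have h2 : ∀ᶠ r in atTop, r ^ ((d : ℝ) + 1) * Real.exp (-(ν / 2) * r) ≤ 1 :=
    (tendsto_rpow_mul_exp_neg_mul_atTop_nhds_zero ((d : ℝ) + 1) (ν / 2) (by positivity)).eventually_le_const one_pos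
  have h3 : ∀ᶠ Γ in atTop, M * Real.exp (-(ν / 2) * Γ) ≤ ε := by
    have : Tendsto (fun Γ : ℝ => M * Real.exp (-(ν / 2) * Γ)) atTop (nhds (M * 0)) := by
      refine Tendsto.const_mul M ?_
      exact Real.tendsto_exp_comp_nhds_zero.2
        (tendsto_id.const_mul_atTop_of_neg (by linarith))
    simpa using this.eventually_le_const (by simpa using hε)
  obtain ⟨A, hA⟩ := eventually_atTop.1 ((h1.and h2).and h3)
  refine ⟨max (max A 1) (((d : ℝ) + 1) / ν), le_max_right _ _, ?_⟩
  intro Γ hΓ p hp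
  have hΓA : A ≤ Γ := le_trans (le_trans (le_max_left _ _) (le_max_left _ _)) hΓ
  have hΓ1 : (1 : ℝ) ≤ Γ := le_trans (le_trans (le_max_right _ _) (le_max_left _ _)) hΓ
  have hΓ0 : (0 : ℝ) < Γ := lt_of_lt_of_le one_pos hΓ1
  have hp0 : (0 : ℝ) < p := lt_of_lt_of_le one_pos hp
  obtain ⟨⟨hb1, hb2⟩, hb3⟩ := hA Γ hΓA
  have hεp : (0:ℝ) ≤ ε := hε.le
  refine max_le ?_ ?_
  · -- first term
    have key : Γ ^ ((d : ℝ) * p) * Real.exp (-ν * p * Γ)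
        = (Γ ^ (d : ℝ) * Real.exp (-ν * Γ)) ^ p := by
      rw [Real.mul_rpow (by positivity) (Real.exp_nonneg _),
        ← Real.rpow_mul hΓ0.le, ← Real.exp_mul]
      ring_nf
    rw [key]
    exact Real.rpow_le_rpow (by positivity) hb1 hp0.le
  · -- second term
    set c : ℝ := ν * p / 2 with hc
    have hc0 : 0 < c := by positivity
    have hbound : ∀ r ∈ Set.Ioi Γ,
        Real.exp (-ν * p * r) * r ^ (((d : ℝ) + 1) * p - 1) ≤ Real.exp (-c * r) := by
      intro r hr
      have hr1 : (1 : ℝ) ≤ r := le_trans hΓ1 (le_of_lt hr)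
      have hr0 : (0 : ℝ) < r := lt_of_lt_of_le one_pos hr1
      have hrA : A ≤ r := le_trans hΓA (le_of_lt hr)
      obtain ⟨⟨_, hc2⟩, _⟩ := hA r hrA
      have step1 : r ^ (((d : ℝ) + 1) * p - 1) ≤ r ^ (((d : ℝ) + 1) * p) :=
        Real.rpow_le_rpow_of_exponent_le hr1 (by linarith)
      have step2 : Real.exp (-ν * p * r) * r ^ (((d : ℝ) + 1) * p)
          = (r ^ ((d : ℝ) + 1) * Real.exp (-ν * r)) ^ p := by
        rw [Real.mul_rpow (by positivity) (Real.exp_nonneg _), ← Real.rpow_mul hr0.le,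
          ← Real.exp_mul]
        ring_nf
      have step3 : r ^ ((d : ℝ) + 1) * Real.exp (-ν * r) ≤ Real.exp (-(ν / 2) * r) := by
        have : Real.exp (-ν * r) = Real.exp (-(ν/2) * r) * Real.exp (-(ν/2) * r) := by
          rw [← Real.exp_add]; ring_nf
        rw [this, ← mul_assoc]
        calc r ^ ((d : ℝ) + 1) * Real.exp (-(ν/2) * r) * Real.exp (-(ν/2) * r)
            ≤ 1 * Real.exp (-(ν/2) * r) := by
              apply mul_le_mul_of_nonneg_right hc2 (Real.exp_nonneg _)
          _ = Real.exp (-(ν/2) * r) := one_mul _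
      have step4 : (r ^ ((d : ℝ) + 1) * Real.exp (-ν * r)) ^ p
          ≤ (Real.exp (-(ν / 2) * r)) ^ p :=
        Real.rpow_le_rpow (by positivity) step3 hp0.le
      have step5 : (Real.exp (-(ν / 2) * r)) ^ p = Real.exp (-c * r) := by
        rw [← Real.exp_mul, hc]; ring_nf
      calc Real.exp (-ν * p * r) * r ^ (((d : ℝ) + 1) * p - 1)
          ≤ Real.exp (-ν * p * r) * r ^ (((d : ℝ) + 1) * p) :=
            mul_le_mul_of_nonneg_left step1 (Real.exp_nonneg _)
        _ = (r ^ ((d : ℝ) + 1) * Real.exp (-ν * r)) ^ p := step2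
        _ ≤ Real.exp (-c * r) := step5 ▸ step4
    have hint : (∫ r in Set.Ioi Γ, Real.exp (-ν * p * r) * r ^ (((d : ℝ) + 1) * p - 1))
        ≤ Real.exp (-c * Γ) / c := by
      rw [← exp_neg_mul_integral_Ioi Γ hc0]
      refine MeasureTheory.integral_mono_of_nonneg ?_ (exp_neg_integrableOn_Ioi Γ hc0) ?_
      · filter_upwards [ae_restrict_mem measurableSet_Ioi] with r hr
        have hr0 : (0:ℝ) < r := lt_trans hΓ0 hr
        positivity
      · filter_upwards [ae_restrict_mem measurableSet_Ioi] with r hr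
        exact hbound r hr
    have hΓp : (0:ℝ) < Γ ^ p := Real.rpow_pos_of_pos hΓ0 _
    have key : 2 / Γ ^ p * (Real.exp (-c * Γ) / c) ≤ (M * Real.exp (-(ν/2) * Γ)) ^ p := by
      have e1 : Real.exp (-c * Γ) = (Real.exp (-(ν/2) * Γ)) ^ p := by
        rw [← Real.exp_mul, hc]; ring_nf
      have hΓp1 : (1:ℝ) ≤ Γ ^ p := Real.one_le_rpow hΓ1 hp0.le
      have h4ν : 2 / Γ ^ p * (Real.exp (-c * Γ) / c) ≤ (4 / ν) * (Real.exp (-(ν/2) * Γ)) ^ p := by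
        rw [e1]
        set E := (Real.exp (-(ν/2) * Γ)) ^ p with hE
        have hE0 : (0:ℝ) ≤ E := by positivity
        have h5 : 2 / Γ ^ p ≤ 2 := by
          rw [div_le_iff₀ hΓp]; nlinarith
        have h6 : 1 / c ≤ 2 / ν := by
          rw [div_le_div_iff₀ hc0 hν, hc]; nlinarith
        calc 2 / Γ ^ p * (E / c) = (2 / Γ ^ p) * (1 / c) * E := by ring
          _ ≤ (2 * (2 / ν)) * E := by
              apply mul_le_mul_of_nonneg_right _ hE0
              exact mul_le_mul h5 h6 (by positivity) (by norm_num)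
          _ = (4 / ν) * E := by ring
      have hMp : (4 / ν) ≤ M ^ p := le_trans hMν (by calc M = M ^ (1:ℝ) := (Real.rpow_one M).symm
        _ ≤ M ^ p := Real.rpow_le_rpow_of_exponent_le hM1 hp)
      calc 2 / Γ ^ p * (Real.exp (-c * Γ) / c)
          ≤ (4 / ν) * (Real.exp (-(ν/2) * Γ)) ^ p := h4ν
        _ ≤ M ^ p * (Real.exp (-(ν/2) * Γ)) ^ p := by
            apply mul_le_mul_of_nonneg_right hMp (by positivity)
        _ = (M * Real.exp (-(ν/2) * Γ)) ^ p := by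
            rw [Real.mul_rpow (by positivity) (Real.exp_nonneg _)]
    calc 2 / Γ ^ p * ∫ r in Set.Ioi Γ, Real.exp (-ν * p * r) * r ^ (((d : ℝ) + 1) * p - 1)
        ≤ 2 / Γ ^ p * (Real.exp (-c * Γ) / c) := by
          apply mul_le_mul_of_nonneg_left hint (by positivity)
      _ ≤ (M * Real.exp (-(ν/2) * Γ)) ^ p := key
      _ ≤ ε ^ p := Real.rpow_le_rpow (by positivity) hb3 hp0.le
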